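/- arXiv:1509.00327 — 2 statements merged into one kernel-verified Lean document; each statement's English description precedes it below -/
import Mathlib

section
/- Let p be a prime and let η : ℤₚⁿ → ℤₚᵐ be a homomorphism of free modules over the ring ℤₚ of p-adic integers. Suppose there exist ℤₚ-bases of the domain and codomain in which the matrix of η is diagonal with, for each i ≥ 0, exactly eᵢ diagonal entries of p-adic valuation i, the remaining diagonal entries being zero (Smith normal form; eᵢ is the multiplicity of pⁱ as an elementary divisor of η). For i ≥ 0 define the submodule Mᵢ = { x ∈ ℤₚⁿ : η(x) ∈ pⁱℤₚᵐ }, and for a submodule R ⊆ ℤₚ^ℓ let R̄ = (R + pℤₚ^ℓ)/pℤₚ^ℓ, an 𝔽ₚ-vector space. Then for every i ≥ 0, dim_{𝔽ₚ} M̄ᵢ = dim_{𝔽ₚ} (ker η)‾ + eᵢ + e_{i+1} + ⋯ (the sum over all k ≥ i of e_k). -/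
open Matrix

section DimMbarHelpers

variable {p : ℕ} [Fact p.Prime]

lemma dvd_mulVec_of_dvd {m n : ℕ} (M : Matrix (Fin m) (Fin n) ℤ_[p]) (v : Fin n → ℤ_[p])
    (c : ℤ_[p]) (h : ∀ j, c ∣ v j) (r : Fin m) : c ∣ M.mulVec v r := by
  rw [Matrix.mulVec, dotProduct]
  exact Finset.dvd_sum fun j _ => (h j).mul_left _

lemma mulVec_diag {m n : ℕ} (D : Matrix (Fin m) (Fin n) ℤ_[p])
    (hdiag : ∀ (r : Fin m) (j : Fin n), (r : ℕ) ≠ (j : ℕ) → D r j = 0)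
    (x : Fin n → ℤ_[p]) (r : Fin m) :
    D.mulVec x r = if h : (r : ℕ) < n then D r ⟨r, h⟩ * x ⟨r, h⟩ else 0 := by
  rw [Matrix.mulVec, dotProduct]
  split_ifs with h
  · refine Finset.sum_eq_single (⟨(r : ℕ), h⟩ : Fin n) (fun j _ hj => ?_) (by simp)
    rw [hdiag r j (fun hc => hj (Fin.ext hc.symm)), zero_mul]
  · refine Finset.sum_eq_zero fun j _ => ?_
    rw [hdiag r j (by omega), zero_mul]

lemma pow_dvd_iff_le_val {d : ℤ_[p]} (hd : d ≠ 0) (i : ℕ) :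
    (p : ℤ_[p]) ^ i ∣ d ↔ (i : ℤ) ≤ d.valuation := by
  rw [Nat.cast_le, ← PadicInt.mem_span_pow_iff_le_valuation d hd i, Ideal.mem_span_singleton]

lemma p_dvd_of_pow_dvd_mul {d x : ℤ_[p]} (hd : d ≠ 0) {i : ℕ}
    (hv : d.valuation < (i : ℤ)) (h : (p : ℤ_[p]) ^ i ∣ d * x) : (p : ℤ_[p]) ∣ x := by
  set v := d.valuation with hvdef
  have hv0 : (v : ℤ) = d.valuation := rfl
  have hvi : v < i := by omega
  have hspec := PadicInt.unitCoeff_spec hd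
  rw [hspec, mul_comm ((PadicInt.unitCoeff hd : ℤ_[p])) _, mul_assoc] at h
  have hsplit : (p : ℤ_[p]) ^ i = (p : ℤ_[p]) ^ v * (p : ℤ_[p]) ^ (i - v) := by
    rw [← pow_add]; congr 1; omega
  rw [hsplit] at h
  have hpv : ((p : ℤ_[p]) ^ v) ≠ 0 := pow_ne_zero _ (NeZero.ne _)
  rw [mul_dvd_mul_iff_left hpv, (PadicInt.unitCoeff hd).dvd_mul_left] at h
  exact dvd_trans (dvd_pow_self (p : ℤ_[p]) (by omega)) h

lemma toZMod_eq_zero_of_p_dvd {x : ℤ_[p]} (h : (p : ℤ_[p]) ∣ x) :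
    PadicInt.toZMod x = 0 := by
  rw [← RingHom.mem_ker, PadicInt.ker_toZMod, PadicInt.maximalIdeal_eq_span_p,
    Ideal.mem_span_singleton]
  exact h

/-- submodule of vectors vanishing on a predicate set -/
def zeroSet (K : Type*) [Field K] {n : ℕ} (C : Fin n → Prop) :
    Submodule K (Fin n → K) where
  carrier := {y | ∀ j, C j → y j = 0}
  add_mem' := fun ha hb j hj => by simp [ha j hj, hb j hj]
  zero_mem' := fun j hj => rfl
  smul_mem' := fun c y hy j hj => by simp [hy j hj]

lemma zeroSet_finrank (K : Type*) [Field K] {n : ℕ} (C : Fin n → Prop) :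
    Nat.card {j // C j} + Module.finrank K (zeroSet K C) = n := by
  classical
  rw [Nat.card_eq_fintype_card]
  let f : (Fin n → K) →ₗ[K] ({j // C j} → K) :=
    LinearMap.funLeft K K Subtype.val
  have hker : LinearMap.ker f = zeroSet K C := by
    ext y
    simp only [LinearMap.mem_ker, LinearMap.funLeft, LinearMap.coe_mk, AddHom.coe_mk]
    constructor
    · intro h j hj; exact congrFun h ⟨j, hj⟩
    · intro h; funext j; exact h j.1 j.2
  have hsurj : Function.Surjective f :=
    LinearMap.funLeft_surjective_of_injective K K _ Subtype.val_injective
  have := LinearMap.finrank_range_add_finrank_ker f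
  rw [LinearMap.range_eq_top.mpr hsurj, hker] at this
  simp only [finrank_top, Module.finrank_pi, Fintype.card_fin, Fintype.card_coe] at this
  omega

end DimMbarHelpers

/-- The dimension over `𝔽ₚ` of the reduction `R̄ = (R + pℤₚ^ℓ)/pℤₚ^ℓ` of a set
`R ⊆ ℤₚ^ℓ`, realized as the image of `R` under coordinatewise reduction mod `p`. -/
noncomputable def dimBar (p : ℕ) [Fact p.Prime] {ℓ : ℕ} (R : Set (Fin ℓ → ℤ_[p])) : ℕ :=
  Module.finrank (ZMod p)
    (Submodule.span (ZMod p)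
      ((fun x : Fin ℓ → ℤ_[p] => fun j => PadicInt.toZMod (x j)) '' R))

section DimMbarHelpers2

variable {p : ℕ} [Fact p.Prime]

/-- if the reduction image of S equals the zeroSet, dimBar is computed -/
lemma dimBar_eq_of_image (n : ℕ) (C : Fin n → Prop) (S : Set (Fin n → ℤ_[p]))
    (h1 : ∀ x ∈ S, ∀ j, C j → PadicInt.toZMod (x j) = 0)
    (h2 : ∀ x : Fin n → ℤ_[p], (∀ j, C j → x j = 0) → x ∈ S) :
    dimBar p S = Module.finrank (ZMod p) (zeroSet (ZMod p) C) := by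
  classical
  have himg : (fun x : Fin n → ℤ_[p] => fun j => PadicInt.toZMod (x j)) '' S
      = (zeroSet (ZMod p) C : Set (Fin n → ZMod p)) := by
    ext y
    constructor
    · rintro ⟨x, hx, rfl⟩ j hj
      exact h1 x hx j hj
    · intro hy
      refine ⟨fun j => if C j then 0 else (((y j).val : ℕ) : ℤ_[p]),
        h2 _ fun j hj => by simp [hj], ?_⟩
      funext j
      by_cases hj : C j
      · simp [hj, hy j hj]
      · simp only [hj, if_false, map_natCast]
        exact ZMod.natCast_rightInverse (y j)
  rw [dimBar, himg, Submodule.span_eq]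

lemma pi_toZMod_mulVec {n : ℕ} (Q : Matrix (Fin n) (Fin n) ℤ_[p]) (x : Fin n → ℤ_[p]) :
    (fun j => PadicInt.toZMod (Q.mulVec x j))
      = (Q.map PadicInt.toZMod).mulVec (fun j => PadicInt.toZMod (x j)) := by
  funext r
  simp [Matrix.mulVec, dotProduct, map_sum]

lemma dimBar_image_unit {n : ℕ} (Q : Matrix (Fin n) (Fin n) ℤ_[p]) (hQ : IsUnit Q.det)
    (S : Set (Fin n → ℤ_[p])) : dimBar p (Q.mulVec '' S) = dimBar p S := by
  classical
  let Qb := Q.map (PadicInt.toZMod : ℤ_[p] →+* ZMod p)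
  have hQb : IsUnit Qb.det := by
    have : Qb.det = PadicInt.toZMod Q.det := (RingHom.map_det PadicInt.toZMod Q).symm
    rw [this]
    exact hQ.map _
  have hinv : Invertible Qb := Qb.invertibleOfIsUnitDet hQb
  let eq : (Fin n → ZMod p) ≃ₗ[ZMod p] (Fin n → ZMod p) := Qb.toLinearEquiv' hinv
  have himg : (fun x : Fin n → ℤ_[p] => fun j => PadicInt.toZMod (x j)) '' (Q.mulVec '' S)
      = eq '' ((fun x : Fin n → ℤ_[p] => fun j => PadicInt.toZMod (x j)) '' S) := by
    rw [Set.image_image, Set.image_image]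
    apply Set.image_congr
    intro x _
    rw [pi_toZMod_mulVec]
    show Qb.mulVec _ = eq _
    rw [show eq (fun j => PadicInt.toZMod (x j))
        = Matrix.toLin' Qb (fun j => PadicInt.toZMod (x j)) from rfl, Matrix.toLin'_apply]
  rw [dimBar, himg, ← LinearEquiv.coe_coe, Submodule.span_image, dimBar]
  exact LinearEquiv.finrank_map_eq eq _

lemma setTransfer {m n : ℕ} (P : Matrix (Fin m) (Fin m) ℤ_[p]) (Q : Matrix (Fin n) (Fin n) ℤ_[p])
    [Invertible P] [Invertible Q] (A : Matrix (Fin m) (Fin n) ℤ_[p])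
    (Pred : (Fin m → ℤ_[p]) → Prop)
    (hP : ∀ v, Pred v → Pred (P.mulVec v)) (hP' : ∀ v, Pred v → Pred ((⅟P).mulVec v)) :
    {x | Pred (A.mulVec x)} = Q.mulVec '' {x | Pred ((P * A * Q).mulVec x)} := by
  ext x
  constructor
  · intro hx
    refine ⟨(⅟Q).mulVec x, ?_, ?_⟩
    · show Pred ((P * A * Q).mulVec ((⅟Q).mulVec x))
      rw [Matrix.mulVec_mulVec, Matrix.mul_assoc (P * A) Q _, mul_invOf_self, Matrix.mul_one,
        ← Matrix.mulVec_mulVec]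
      exact hP _ hx
    · rw [Matrix.mulVec_mulVec, mul_invOf_self, Matrix.one_mulVec]
  · rintro ⟨y, hy, rfl⟩
    show Pred (A.mulVec (Q.mulVec y))
    have : A.mulVec (Q.mulVec y) = (⅟P).mulVec ((P * A * Q).mulVec y) := by
      rw [Matrix.mulVec_mulVec, Matrix.mulVec_mulVec]
      rw [← Matrix.mul_assoc, ← Matrix.mul_assoc, invOf_mul_self, Matrix.one_mul]
    rw [this]
    exact hP' _ hy

end DimMbarHelpers2

/-- **Lemma (first part).** Let `η : ℤₚⁿ → ℤₚᵐ` be given by a matrix `A` which has a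
Smith normal form whose diagonal has exactly `e i` entries of valuation `i` (the rest
being zero).  With `Mᵢ = {x : η x ∈ pⁱℤₚᵐ}`, we have
`dim M̄ᵢ = dim (ker η)‾ + eᵢ + e_{i+1} + ⋯`. -/
theorem dim_Mbar (p : ℕ) [Fact p.Prime] (n m : ℕ)
    (A : Matrix (Fin m) (Fin n) ℤ_[p]) (e : ℕ → ℕ)
    (hSNF : ∃ (P : Matrix (Fin m) (Fin m) ℤ_[p]) (Q : Matrix (Fin n) (Fin n) ℤ_[p]),
      IsUnit P.det ∧ IsUnit Q.det ∧
      (∀ (i : Fin m) (j : Fin n), (i : ℕ) ≠ (j : ℕ) → (P * A * Q) i j = 0) ∧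
      (∀ k : ℕ, e k = Nat.card {ij : Fin m × Fin n //
        (P * A * Q) ij.1 ij.2 ≠ 0 ∧ ((P * A * Q) ij.1 ij.2).valuation = (k : ℤ)})) :
    ∀ i : ℕ,
      dimBar p {x : Fin n → ℤ_[p] | ∀ j, (p : ℤ_[p]) ^ i ∣ A.mulVec x j} =
        dimBar p {x : Fin n → ℤ_[p] | A.mulVec x = 0} + ∑ᶠ (k : ℕ) (_ : i ≤ k), e k := by
  classical
  obtain ⟨P, Q, hP, hQ, hdiag, he⟩ := hSNF
  intro i
  set D := P * A * Q with hD
  haveI iP : Invertible P := P.invertibleOfIsUnitDet hP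
  haveI iQ : Invertible Q := Q.invertibleOfIsUnitDet hQ
  -- the column predicates
  set Cc : Fin n → Prop :=
    fun j => ∃ h : (j : ℕ) < m, D ⟨j, h⟩ j ≠ 0 ∧ (D ⟨j, h⟩ j).valuation < (i : ℤ) with hCc
  set Ck : Fin n → Prop := fun j => ∃ h : (j : ℕ) < m, D ⟨j, h⟩ j ≠ 0 with hCk
  -- transfer to the diagonal matrix
  have hsetM : {x : Fin n → ℤ_[p] | ∀ j, (p : ℤ_[p]) ^ i ∣ A.mulVec x j}
      = Q.mulVec '' {x : Fin n → ℤ_[p] | ∀ j, (p : ℤ_[p]) ^ i ∣ D.mulVec x j} := by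
    rw [hD]
    exact setTransfer P Q A (fun v => ∀ j, (p : ℤ_[p]) ^ i ∣ v j)
      (fun v hv r => dvd_mulVec_of_dvd _ _ _ hv r)
      (fun v hv r => dvd_mulVec_of_dvd _ _ _ hv r)
  have hsetK : {x : Fin n → ℤ_[p] | A.mulVec x = 0}
      = Q.mulVec '' {x : Fin n → ℤ_[p] | D.mulVec x = 0} := by
    rw [hD]
    exact setTransfer P Q A (fun v => v = 0)
      (fun v hv => by rw [hv, Matrix.mulVec_zero])
      (fun v hv => by rw [hv, Matrix.mulVec_zero])
  -- compute the two dimBar's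
  have hdimM : dimBar p {x : Fin n → ℤ_[p] | ∀ j, (p : ℤ_[p]) ^ i ∣ A.mulVec x j}
      = Module.finrank (ZMod p) (zeroSet (ZMod p) Cc) := by
    rw [hsetM, dimBar_image_unit Q hQ]
    apply dimBar_eq_of_image
    · rintro x hx j ⟨hjm, hd0, hval⟩
      have hrow := mulVec_diag D hdiag x ⟨(j : ℕ), hjm⟩
      rw [dif_pos (show ((⟨(j : ℕ), hjm⟩ : Fin m) : ℕ) < n from j.isLt)] at hrow
      simp only [Fin.eta] at hrow
      have hdvd := hx ⟨(j : ℕ), hjm⟩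
      rw [hrow] at hdvd
      exact toZMod_eq_zero_of_p_dvd (p_dvd_of_pow_dvd_mul hd0 hval hdvd)
    · intro x hx r
      show (p : ℤ_[p]) ^ i ∣ D.mulVec x r
      rw [mulVec_diag D hdiag x r]
      split_ifs with h
      · by_cases hc : Cc ⟨(r : ℕ), h⟩
        · rw [hx _ hc, mul_zero]
          exact dvd_zero _
        · by_cases hd0 : D r ⟨(r : ℕ), h⟩ = 0
          · rw [hd0, zero_mul]
            exact dvd_zero _
          · by_cases hval : (D r ⟨(r : ℕ), h⟩).valuation < (i : ℤ)
            · exact absurd ⟨r.isLt, hd0, hval⟩ hc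
            · push_neg at hval
              exact ((pow_dvd_iff_le_val hd0 i).mpr hval).mul_right _
      · exact dvd_zero _
  have hdimK : dimBar p {x : Fin n → ℤ_[p] | A.mulVec x = 0}
      = Module.finrank (ZMod p) (zeroSet (ZMod p) Ck) := by
    rw [hsetK, dimBar_image_unit Q hQ]
    apply dimBar_eq_of_image
    · rintro x hx j ⟨hjm, hd0⟩
      have hrow := mulVec_diag D hdiag x ⟨(j : ℕ), hjm⟩
      rw [dif_pos (show ((⟨(j : ℕ), hjm⟩ : Fin m) : ℕ) < n from j.isLt)] at hrow
      simp only [Fin.eta] at hrow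
      have hz : D ⟨(j : ℕ), hjm⟩ j * x j = 0 := by
        rw [← hrow]
        exact congrFun hx ⟨(j : ℕ), hjm⟩
      rcases mul_eq_zero.mp hz with h | h
      · exact absurd h hd0
      · rw [h]
        exact map_zero _
    · intro x hx
      show D.mulVec x = 0
      funext r
      rw [mulVec_diag D hdiag x r]
      split_ifs with h
      · by_cases hd0 : D r ⟨(r : ℕ), h⟩ = 0
        · rw [hd0, zero_mul]; rfl
        · have hck : Ck ⟨(r : ℕ), h⟩ := ⟨r.isLt, hd0⟩
          rw [hx _ hck, mul_zero]; rfl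
      · rfl
  -- counting
  set T : Finset (Fin m × Fin n) :=
    Finset.univ.filter (fun ij => D ij.1 ij.2 ≠ 0) with hT
  have he' : ∀ k : ℕ, e k
      = (T.filter (fun ij => (D ij.1 ij.2).valuation = (k : ℤ))).card := by
    intro k
    rw [he k, Nat.card_eq_fintype_card, Fintype.card_subtype, hT, Finset.filter_filter]
  -- matching pairs in T with columns
  have hsnd : ∀ ij ∈ T, ((ij : Fin m × Fin n).1 : ℕ) = ((ij : Fin m × Fin n).2 : ℕ) := by
    intro ij hij
    rw [hT, Finset.mem_filter] at hij
    by_contra hne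
    exact hij.2 (hdiag _ _ hne)
  have hsnd_inj : ∀ ij ∈ T, ∀ ij' ∈ T, (ij : Fin m × Fin n).2 = (ij' : Fin m × Fin n).2
      → ij = ij' := by
    intro ij hij ij' hij' hsd
    have h1 := hsnd ij hij
    have h2 := hsnd ij' hij'
    have : (ij.1 : ℕ) = (ij'.1 : ℕ) := by rw [h1, h2, hsd]
    exact Prod.ext (Fin.ext this) hsd
  -- the card identities
  have himgK : T.image Prod.snd = Finset.univ.filter (fun j => Ck j) := by
    ext j
    rw [Finset.mem_image, Finset.mem_filter]
    constructor
    · rintro ⟨ij, hij, rfl⟩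
      have hmem := hij
      rw [hT, Finset.mem_filter] at hmem
      have h1 := hsnd ij hij
      refine ⟨Finset.mem_univ _, h1 ▸ ij.1.isLt, ?_⟩
      have heq : (⟨(ij.2 : ℕ), h1 ▸ ij.1.isLt⟩ : Fin m) = ij.1 := Fin.ext h1.symm
      rw [heq]
      exact hmem.2
    · rintro ⟨-, h, hd⟩
      refine ⟨⟨⟨(j : ℕ), h⟩, j⟩, ?_, rfl⟩
      rw [hT, Finset.mem_filter]
      exact ⟨Finset.mem_univ _, hd⟩
  have hcardK : Nat.card {j // Ck j} = T.card := by
    rw [Nat.card_eq_fintype_card, Fintype.card_subtype, ← himgK,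
      Finset.card_image_of_injOn (fun a ha b hb => hsnd_inj a ha b hb)]
  have himgC : (T.filter (fun ij => (D ij.1 ij.2).valuation < (i : ℤ))).image Prod.snd
      = Finset.univ.filter (fun j => Cc j) := by
    ext j
    rw [Finset.mem_image, Finset.mem_filter]
    constructor
    · rintro ⟨ij, hij, rfl⟩
      rw [Finset.mem_filter] at hij
      have hmem := hij.1
      rw [hT, Finset.mem_filter] at hmem
      have h1 := hsnd ij hij.1
      refine ⟨Finset.mem_univ _, h1 ▸ ij.1.isLt, ?_, ?_⟩
      · have heq : (⟨(ij.2 : ℕ), h1 ▸ ij.1.isLt⟩ : Fin m) = ij.1 := Fin.ext h1.symm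
        rw [heq]
        exact hmem.2
      · have heq : (⟨(ij.2 : ℕ), h1 ▸ ij.1.isLt⟩ : Fin m) = ij.1 := Fin.ext h1.symm
        rw [heq]
        exact hij.2
    · rintro ⟨-, h, hd, hv⟩
      refine ⟨⟨⟨(j : ℕ), h⟩, j⟩, ?_, rfl⟩
      rw [Finset.mem_filter, hT, Finset.mem_filter]
      exact ⟨⟨Finset.mem_univ _, hd⟩, hv⟩
  have hcardC : Nat.card {j // Cc j}
      = (T.filter (fun ij => (D ij.1 ij.2).valuation < (i : ℤ))).card := by
    rw [Nat.card_eq_fintype_card, Fintype.card_subtype, ← himgC,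
      Finset.card_image_of_injOn (fun a ha b hb => hsnd_inj a (Finset.mem_of_mem_filter a ha)
        b (Finset.mem_of_mem_filter b hb))]
  -- the finsum
  have hsum : (∑ᶠ (k : ℕ) (_ : i ≤ k), e k)
      = (T.filter (fun ij => (i : ℤ) ≤ (D ij.1 ij.2).valuation)).card := by
    set V : Finset ℕ := T.image (fun ij => (D ij.1 ij.2).valuation) with hV
    have hg : ∀ k : ℕ, (∑ᶠ (_ : i ≤ k), e k) = if i ≤ k then e k else 0 :=
      fun k => finsum_eq_if
    have hsupp : (Function.support fun k => ∑ᶠ (_ : i ≤ k), e k) ⊆ ↑V := by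
      intro k hk
      rw [Function.mem_support, hg] at hk
      have hek : e k ≠ 0 := by
        by_cases h : i ≤ k
        · simpa [h] using hk
        · simp [h] at hk
      rw [he' k] at hek
      obtain ⟨ij, hij⟩ := Finset.card_ne_zero.mp hek
      rw [Finset.mem_filter] at hij
      rw [hV, Finset.mem_coe, Finset.mem_image]
      exact ⟨ij, hij.1, by exact_mod_cast hij.2⟩
    have hmapsto : ∀ ij ∈ T.filter (fun ij => (i : ℤ) ≤ (D ij.1 ij.2).valuation),
        (D ij.1 ij.2).valuation ∈ V.filter (fun k => i ≤ k) := by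
      intro ij hij
      rw [Finset.mem_filter] at hij ⊢
      have h0 := Nat.zero_le (D ij.1 ij.2).valuation
      refine ⟨Finset.mem_image.mpr ⟨ij, hij.1, rfl⟩, ?_⟩
      have := hij.2
      omega
    have hfiber : ∀ k ∈ V.filter (fun k => i ≤ k), e k
        = ((T.filter (fun ij => (i : ℤ) ≤ (D ij.1 ij.2).valuation)).filter
            (fun ij => (D ij.1 ij.2).valuation = k)).card := by
      intro k hk
      rw [Finset.mem_filter] at hk
      rw [he' k, hT, Finset.filter_filter, Finset.filter_filter, Finset.filter_filter]
      congr 1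
      apply Finset.filter_congr
      intro ij _
      have h0 := Nat.zero_le (D ij.1 ij.2).valuation
      have hik := hk.2
      constructor
      · rintro ⟨hd, hv⟩
        exact ⟨hd, by omega, by omega⟩
      · rintro ⟨hd, h1, h2⟩
        exact ⟨hd, by omega⟩
    rw [finsum_eq_finset_sum_of_support_subset _ hsupp,
      Finset.sum_congr rfl (fun k _ => hg k), ← Finset.sum_filter,
      Finset.card_eq_sum_card_fiberwise hmapsto]
    exact Finset.sum_congr rfl hfiber
  -- final arithmetic
  have hzc := zeroSet_finrank (ZMod p) Cc
  have hzk := zeroSet_finrank (ZMod p) Ck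
  have hsplit := Finset.card_filter_add_card_filter_not (s := T)
    (p := fun ij => (D ij.1 ij.2).valuation < (i : ℤ))
  have hfiltereq : T.filter (fun ij => ¬ (D ij.1 ij.2).valuation < (i : ℤ))
      = T.filter (fun ij => (i : ℤ) ≤ (D ij.1 ij.2).valuation) := by
    apply Finset.filter_congr
    intro ij _
    simp [not_lt]
  rw [hfiltereq] at hsplit
  have hTn : T.card ≤ n := by
    rw [← hcardK, Nat.card_eq_fintype_card]
    calc Fintype.card {j // Ck j} ≤ Fintype.card (Fin n) := Fintype.card_subtype_le _
      _ = n := Fintype.card_fin n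
  rw [hdimM, hdimK, hsum]
  omega
end

section
/- Let Γ be a Moore(57,2) graph. Then every element of the critical group K(Γ) is annihilated by 3250 = 2 · 5³ · 13; that is, the exponent of the finite abelian group K(Γ) divides 2 · 5³ · 13. Equivalently, every elementary divisor of the Laplacian matrix L of Γ lies in the set {1, 2, 13, 5, 5², 5³, 2·5ⁱ·13-divisors}, i.e., divides 2·5³·13. -/
open SimpleGraph Matrix

/-- The cokernel of the Laplacian matrix of a graph on `Fin 3250`,
viewed as a `ℤ`-linear map `ℤ^V → ℤ^V`. -/
noncomputable abbrev lapCoker (G : SimpleGraph (Fin 3250)) [DecidableRel G.Adj] :=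
  (Fin 3250 → ℤ) ⧸ LinearMap.range (Matrix.mulVecLin (G.lapMatrix ℤ))

/-- The critical group: the torsion subgroup of the cokernel of the Laplacian. -/
noncomputable abbrev criticalGroup (G : SimpleGraph (Fin 3250)) [DecidableRel G.Adj] :=
  Submodule.torsion ℤ (lapCoker G)

private lemma key_ring {R : Type*} [Ring R] (a j : R)
    (hsq : a * a = (56:ℤ) • (1:R) - a + j) :
    ((57:ℤ) • (1:R) - a) * ((115:ℤ) • (1:R) - ((57:ℤ) • (1:R) - a))
      = (3250:ℤ) • (1:R) - j := by
  simp only [zsmul_eq_mul] at hsq ⊢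
  push_cast at hsq ⊢
  have expand : ((57 : R) * 1 - a) * (115 * 1 - (57 * 1 - a))
      = 3306 * 1 + a * a - a - 2 * (a * a) := by noncomm_ring
  rw [expand, hsq]; noncomm_ring

private lemma moore_key (G : SimpleGraph (Fin 3250)) [DecidableRel G.Adj]
    (h : G.IsSRGWith 3250 57 0 1) :
    G.lapMatrix ℤ * ((115:ℤ) • 1 - G.lapMatrix ℤ)
        = (3250:ℤ) • 1 - Matrix.of (fun _ _ => (1:ℤ))
      ∧ Matrix.of (fun _ _ => (1:ℤ)) * G.lapMatrix ℤ = 0 := by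
  have hA : G.lapMatrix ℤ = (57:ℤ) • 1 - G.adjMatrix ℤ := by
    ext i j
    simp only [lapMatrix, degMatrix, Matrix.sub_apply, Matrix.smul_apply, Matrix.of_apply,
      Matrix.one_apply, smul_eq_mul, adjMatrix_apply]
    by_cases hij : i = j <;> simp only [hij, Matrix.diagonal_apply, h.regular j, if_true, if_false] <;> simp
  have hC : (Gᶜ.adjMatrix ℤ) = Matrix.of (fun _ _ => (1:ℤ)) - 1 - G.adjMatrix ℤ := by
    ext i j
    by_cases hij : i = j
    · simp [hij, Matrix.one_apply]
    · by_cases ha : G.Adj i j <;> simp [compl_adj, hij, ha, Matrix.one_apply]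
  have h2 := h.matrix_eq (α := ℤ)
  rw [hC, pow_two] at h2
  have hsq : G.adjMatrix ℤ * G.adjMatrix ℤ
      = (56:ℤ) • (1 : Matrix (Fin 3250) (Fin 3250) ℤ) - G.adjMatrix ℤ
        + Matrix.of (fun _ _ => (1:ℤ)) := by
    rw [h2]
    simp only [zero_smul, one_smul, ← natCast_zsmul]
    push_cast
    module
  refine ⟨by rw [hA]; exact key_ring _ _ hsq, ?_⟩
  ext i j
  simp only [Matrix.mul_apply, Matrix.of_apply, one_mul, Matrix.zero_apply]
  have hz := congrFun (G.lapMatrix_mulVec_const_eq_zero (R := ℤ)) j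
  simp only [Matrix.mulVec, dotProduct, mul_one, Pi.zero_apply] at hz
  calc ∑ k, G.lapMatrix ℤ k j = ∑ k, G.lapMatrix ℤ j k := by
        refine Finset.sum_congr rfl fun k _ => ?_
        have := congrFun (congrFun (G.isSymm_lapMatrix (R := ℤ)) k) j
        rw [Matrix.transpose_apply] at this
        exact this.symm
    _ = 0 := hz

/-- For a Moore(57,2) graph, every element of the critical group is annihilated by
`3250 = 2·5³·13`; i.e. the exponent of the critical group divides `2·5³·13`. -/
theorem moore_critical_group_exponent (G : SimpleGraph (Fin 3250)) [DecidableRel G.Adj]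
    (h : G.IsSRGWith 3250 57 0 1) :
    (∀ x : criticalGroup G, (3250 : ℕ) • x = 0) ∧
      AddMonoid.exponent (criticalGroup G) ∣ 2 * 5 ^ 3 * 13 := by
  obtain ⟨hmain, hJL⟩ := moore_key G h
  have claim : ∀ x : criticalGroup G, (3250 : ℕ) • x = 0 := by
    rintro ⟨x, hx⟩
    obtain ⟨a, ha⟩ := hx
    apply Subtype.ext
    show (3250 : ℕ) • x = 0
    obtain ⟨v, rfl⟩ := Submodule.Quotient.mk_surjective _ x
    rw [← Submodule.Quotient.mk_smul, Submodule.Quotient.mk_eq_zero] at ha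
    obtain ⟨y, hy⟩ := ha
    rw [Matrix.mulVecLin_apply, Submonoid.smul_def] at hy
    -- the all-ones matrix kills v
    have hsum : (Matrix.of (fun _ _ => (1:ℤ)) : Matrix (Fin 3250) (Fin 3250) ℤ) *ᵥ v = 0 := by
      have h1 : (a : ℤ) • ((Matrix.of (fun _ _ => (1:ℤ)) : Matrix (Fin 3250) (Fin 3250) ℤ) *ᵥ v) = 0 := by
        rw [← Matrix.mulVec_smul, ← hy, Matrix.mulVec_mulVec, hJL, Matrix.zero_mulVec]
      rcases smul_eq_zero.mp h1 with h0 | h0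
      · exact absurd h0 (nonZeroDivisors.coe_ne_zero a)
      · exact h0
    have hv : (3250 : ℤ) • v
        = G.lapMatrix ℤ *ᵥ (((115:ℤ) • 1 - G.lapMatrix ℤ) *ᵥ v) := by
      rw [Matrix.mulVec_mulVec, hmain, Matrix.sub_mulVec, hsum, sub_zero,
        Matrix.smul_mulVec, Matrix.one_mulVec]
    rw [← Submodule.Quotient.mk_smul, Submodule.Quotient.mk_eq_zero]
    refine ⟨((115:ℤ) • 1 - G.lapMatrix ℤ) *ᵥ v, ?_⟩
    rw [Matrix.mulVecLin_apply, ← hv]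
    simp
  refine ⟨claim, ?_⟩
  have h3250 : (2 * 5 ^ 3 * 13 : ℕ) = 3250 := by norm_num
  rw [h3250, AddMonoid.exponent_dvd_iff_forall_nsmul_eq_zero]
  exact claim
end
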